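/- Let m, p be nonnegative integers and let R(z) = N(z)/D(z) be the [m+p/m] Padé approximant to e^z. For each j with 1 ≤ j ≤ p, define g_j(z) = (R(z) − Σ_{i=0}^{j-1} z^i/i!)/z^j. Then g_j is a rational function with numerator degree at most m+p−j and denominator D of degree m, and φ_j(z) − g_j(z) = O(z^{2m+p−j+1}) as z → 0; i.e., g_j is the [m+p−j/m] Padé approximant to φ_j. -/

import Mathlib

open Filter Topology Asymptotics Polynomial

noncomputable def phiFun (j : ℕ) (z : ℂ) : ℂ :=
  ∑' k : ℕ, z ^ k / ((k + j).factorial : ℂ)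

lemma phiFun_key (j : ℕ) (z : ℂ) :
    z ^ j * phiFun j z
      = Complex.exp z - ∑ i ∈ Finset.range j, z ^ i / (i.factorial : ℂ) := by
  have hs : Summable (fun n : ℕ => z ^ n / (n.factorial : ℂ)) :=
    NormedSpace.expSeries_div_summable z
  have hexp : Complex.exp z = ∑' n : ℕ, z ^ n / (n.factorial : ℂ) := by
    rw [Complex.exp_eq_exp_ℂ, NormedSpace.exp_eq_tsum_div]
  have hshift := Summable.sum_add_tsum_nat_add (f := fun n : ℕ => z ^ n / (n.factorial : ℂ)) j hs
  have : z ^ j * phiFun j z = ∑' k : ℕ, z ^ (k + j) / ((k + j).factorial : ℂ) := by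
    rw [phiFun, ← tsum_mul_left]
    congr 1; ext k
    rw [pow_add, mul_comm (z ^ k), mul_div_assoc]
  rw [this, hexp, ← hshift]
  ring

/-- A polynomial that is `O(z^j)` near `0` is divisible by `X^j`. -/
lemma dvd_of_isBigO : ∀ (j : ℕ) (P : Polynomial ℂ),
    (fun z : ℂ => P.eval z) =O[𝓝[≠] (0 : ℂ)] (fun z => z ^ j) → (X : Polynomial ℂ) ^ j ∣ P := by
  intro j
  induction j with
  | zero => intro P _; simpa using one_dvd P
  | succ j ih =>
    intro P hP
    have hzero : P.eval 0 = 0 := by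
      have h1 : Tendsto (fun z : ℂ => z ^ (j + 1)) (𝓝[≠] (0 : ℂ)) (𝓝 0) := by
        have := (continuous_pow (j + 1) (M := ℂ)).tendsto 0
        simpa using this.mono_left nhdsWithin_le_nhds
      have h2 : Tendsto (fun z : ℂ => P.eval z) (𝓝[≠] (0 : ℂ)) (𝓝 0) :=
        hP.trans_tendsto h1
      have h3 : Tendsto (fun z : ℂ => P.eval z) (𝓝[≠] (0 : ℂ)) (𝓝 (P.eval 0)) :=
        (P.continuous_aeval.tendsto 0).mono_left nhdsWithin_le_nhds
      exact tendsto_nhds_unique h3 h2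
    obtain ⟨Q, hQ⟩ : (X : Polynomial ℂ) ∣ P := by
      have := (dvd_iff_isRoot (p := P) (a := 0)).mpr hzero
      simpa using this
    have hQO : (fun z : ℂ => Q.eval z) =O[𝓝[≠] (0 : ℂ)] (fun z => z ^ j) := by
      rw [isBigO_iff] at hP ⊢
      obtain ⟨C, hC⟩ := hP
      refine ⟨C, ?_⟩
      filter_upwards [hC, self_mem_nhdsWithin] with z hz hz0
      have hz0' : (0 : ℝ) < ‖z‖ := by simpa [norm_pos_iff] using hz0
      have key : ‖z‖ * ‖Q.eval z‖ ≤ ‖z‖ * (C * ‖z‖ ^ j) := by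
        have h := hz
        rw [hQ] at h
        simp only [eval_mul, eval_X, norm_mul, norm_pow, pow_succ] at h
        nlinarith [h]
      have := le_of_mul_le_mul_left key hz0'
      simpa using this
    obtain ⟨R, hR⟩ := ih Q hQO
    exact ⟨R, by rw [hQ, hR, pow_succ]; ring⟩

lemma pow_isBigO_pow {a b : ℕ} (h : b ≤ a) :
    (fun z : ℂ => z ^ a) =O[𝓝[≠] (0 : ℂ)] fun z => z ^ b := by
  have h1 : (fun z : ℂ => z ^ (a - b)) =O[𝓝[≠] (0 : ℂ)] (fun _ => (1 : ℂ)) := by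
    exact Tendsto.isBigO_one ℂ
      (((continuous_pow (a - b) (M := ℂ)).tendsto 0).mono_left nhdsWithin_le_nhds)
  have h2 := (isBigO_refl (fun z : ℂ => z ^ b) (𝓝[≠] (0 : ℂ))).mul h1
  refine h2.congr (fun z => ?_) (fun z => ?_)
  · rw [← pow_add]; congr 1; omega
  · simp

lemma norm_le_one_eventually : ∀ᶠ z : ℂ in 𝓝[≠] (0 : ℂ), ‖z‖ ≤ 1 := by
  have : ∀ᶠ z : ℂ in 𝓝 (0 : ℂ), ‖z‖ ≤ 1 := by
    filter_upwards [Metric.closedBall_mem_nhds (0 : ℂ) one_pos] with z hz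
    simpa [Metric.mem_closedBall, dist_zero_right] using hz
  exact this.filter_mono nhdsWithin_le_nhds

lemma exp_sub_partial_isBigO (j : ℕ) (hj : 1 ≤ j) :
    (fun z : ℂ => Complex.exp z - ∑ i ∈ Finset.range j, z ^ i / (i.factorial : ℂ))
      =O[𝓝[≠] (0 : ℂ)] fun z => z ^ j := by
  rw [isBigO_iff]
  refine ⟨(j.succ : ℝ) * ((j.factorial : ℝ) * j)⁻¹, ?_⟩
  filter_upwards [norm_le_one_eventually] with z hz
  have := Complex.exp_bound (x := z) hz hj
  calc ‖Complex.exp z - ∑ i ∈ Finset.range j, z ^ i / (i.factorial : ℂ)‖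
      ≤ ‖z‖ ^ j * ((j.succ : ℝ) * ((j.factorial : ℝ) * j)⁻¹) := by
        simpa using this
    _ = (j.succ : ℝ) * ((j.factorial : ℝ) * j)⁻¹ * ‖z ^ j‖ := by
        rw [norm_pow]; ring

/-- Let `R = N/D` be the `[m+p/m]` Padé approximant to `e^z` (numerator degree `≤ m+p`,
denominator degree `≤ m`, `D(0) = 1`, and `e^z − R(z) = O(z^{2m+p+1})` at `0`).
For `1 ≤ j ≤ p`, set `g_j(z) = (R(z) − ∑_{i<j} z^i/i!)/z^j`.  Then `g_j` is a rational
function with numerator of degree at most `m+p−j` and denominator `D`, and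
`φ_j(z) − g_j(z) = O(z^{2m+p−j+1})`; i.e. `g_j` is the `[m+p−j/m]` Padé approximant
to `φ_j`. -/
theorem pade_phi_recurrence (m p j : ℕ) (hj1 : 1 ≤ j) (hjp : j ≤ p)
    (N D : Polynomial ℂ) (hN : N.natDegree ≤ m + p) (hD : D.natDegree ≤ m)
    (hD0 : D.eval 0 = 1)
    (hPade : (fun z : ℂ => Complex.exp z - N.eval z / D.eval z)
      =O[𝓝[≠] (0 : ℂ)] fun z => z ^ (2 * m + p + 1))
    (g : ℂ → ℂ)
    (hg : ∀ z : ℂ, g z =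
      (N.eval z / D.eval z - ∑ i ∈ Finset.range j, z ^ i / (i.factorial : ℂ)) / z ^ j) :
    (∃ Nj : Polynomial ℂ, Nj.natDegree ≤ m + p - j ∧
        ∀ z : ℂ, z ≠ 0 → D.eval z ≠ 0 → g z = Nj.eval z / D.eval z) ∧
      (fun z : ℂ => phiFun j z - g z) =O[𝓝[≠] (0 : ℂ)] fun z => z ^ (2 * m + p - j + 1) := by
  -- the partial sum polynomial
  set S : Polynomial ℂ := ∑ i ∈ Finset.range j, C ((i.factorial : ℂ)⁻¹) * X ^ i with hS
  have hSeval : ∀ z : ℂ, S.eval z = ∑ i ∈ Finset.range j, z ^ i / (i.factorial : ℂ) := by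
    intro z
    rw [hS, Polynomial.eval_finset_sum]
    refine Finset.sum_congr rfl fun i _ => ?_
    simp only [Polynomial.eval_mul, Polynomial.eval_C, Polynomial.eval_pow, Polynomial.eval_X]
    rw [div_eq_mul_inv, mul_comm]
  have hSdeg : S.natDegree ≤ j - 1 := by
    refine Polynomial.natDegree_sum_le_of_forall_le _ _ fun i hi => ?_
    refine (Polynomial.natDegree_C_mul_le _ _).trans ?_
    rw [Polynomial.natDegree_X_pow]
    have := Finset.mem_range.mp hi; omega
  set Q : Polynomial ℂ := N - S * D with hQ
  -- eventually D.eval z ≠ 0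
  have hDcont : Continuous fun z : ℂ => D.eval z := D.continuous_aeval
  have hDne : ∀ᶠ z : ℂ in 𝓝[≠] (0 : ℂ), D.eval z ≠ 0 := by
    have h0 : D.eval 0 ≠ 0 := by rw [hD0]; exact one_ne_zero
    exact ((hDcont.continuousAt.eventually_ne h0)).filter_mono nhdsWithin_le_nhds
  -- Q is O(z^j)
  have hDO : (fun z : ℂ => D.eval z) =O[𝓝[≠] (0 : ℂ)] (fun _ => (1 : ℂ)) :=
    Tendsto.isBigO_one ℂ ((hDcont.tendsto 0).mono_left nhdsWithin_le_nhds)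
  have h1 := exp_sub_partial_isBigO j hj1
  have h2 : (fun z : ℂ => Complex.exp z - N.eval z / D.eval z)
      =O[𝓝[≠] (0 : ℂ)] fun z => z ^ j :=
    hPade.trans (pow_isBigO_pow (by omega))
  have hQO : (fun z : ℂ => Q.eval z) =O[𝓝[≠] (0 : ℂ)] fun z => z ^ j := by
    have hmul := hDO.mul (h1.sub h2)
    refine (hmul.congr' ?_ ?_)
    · filter_upwards [hDne] with z hz
      rw [hQ]
      simp only [Polynomial.eval_sub, Polynomial.eval_mul, hSeval]
      have key : (Complex.exp z - ∑ i ∈ Finset.range j, z ^ i / (i.factorial : ℂ)) -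
          (Complex.exp z - N.eval z / D.eval z)
          = N.eval z / D.eval z - ∑ i ∈ Finset.range j, z ^ i / (i.factorial : ℂ) := by ring
      rw [key, mul_sub, mul_div_cancel₀ _ hz]
      ring
    · filter_upwards with z; simp
  obtain ⟨Nj, hNj⟩ := dvd_of_isBigO j Q hQO
  have hQdeg : Q.natDegree ≤ m + p := by
    refine (Polynomial.natDegree_sub_le _ _).trans ?_
    refine max_le hN ?_
    refine (Polynomial.natDegree_mul_le).trans ?_
    omega
  have hNjdeg : Nj.natDegree ≤ m + p - j := by
    rcases eq_or_ne Nj 0 with h | h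
    · simp [h]
    · have hx : (X : Polynomial ℂ) ^ j ≠ 0 := pow_ne_zero _ Polynomial.X_ne_zero
      have := Polynomial.natDegree_mul hx h
      rw [← hNj, Polynomial.natDegree_X_pow] at this
      omega
  have hQev : ∀ z : ℂ, Q.eval z = z ^ j * Nj.eval z := by
    intro z
    rw [hNj]; simp
  constructor
  · refine ⟨Nj, hNjdeg, fun z hz hDz => ?_⟩
    have hQz := hQev z
    rw [hQ] at hQz
    simp only [Polynomial.eval_sub, Polynomial.eval_mul, hSeval] at hQz
    rw [hg]
    rw [div_eq_div_iff (pow_ne_zero _ hz) hDz, sub_mul, div_mul_cancel₀ _ hDz]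
    linear_combination hQz
  · -- asymptotics
    have hEq : ∀ᶠ z : ℂ in 𝓝[≠] (0 : ℂ),
        phiFun j z - g z = (Complex.exp z - N.eval z / D.eval z) / z ^ j := by
      filter_upwards [self_mem_nhdsWithin] with z hz
      have hz0 : z ≠ 0 := hz
      have hzj : z ^ j ≠ 0 := pow_ne_zero _ hz0
      have hphi : phiFun j z
          = (Complex.exp z - ∑ i ∈ Finset.range j, z ^ i / (i.factorial : ℂ)) / z ^ j := by
        rw [eq_div_iff hzj, mul_comm, ← phiFun_key]
      rw [hphi, hg, div_sub_div_same]
      congr 1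
      ring
    rw [isBigO_iff] at hPade
    obtain ⟨C, hC⟩ := hPade
    rw [isBigO_iff]
    refine ⟨C, ?_⟩
    filter_upwards [hEq, hC, self_mem_nhdsWithin] with z hzeq hzC hz0
    have hz0' : z ≠ 0 := hz0
    have hnz : (0 : ℝ) < ‖z‖ := by simpa [norm_pos_iff] using hz0'
    rw [hzeq]
    calc ‖(Complex.exp z - N.eval z / D.eval z) / z ^ j‖
        = ‖Complex.exp z - N.eval z / D.eval z‖ / ‖z‖ ^ j := by
          rw [norm_div, norm_pow]
      _ ≤ (C * ‖z ^ (2 * m + p + 1)‖) / ‖z‖ ^ j := by gcongr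
      _ = C * ‖z ^ (2 * m + p - j + 1)‖ := by
          rw [norm_pow, norm_pow,
            show 2 * m + p + 1 = (2 * m + p - j + 1) + j by omega, pow_add,
            mul_div_assoc, mul_div_cancel_right₀ _ (pow_ne_zero j (ne_of_gt hnz))]
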